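/- Let K be the algebraic closure of ℚ and let R = ℚ{X,Y,Z}/⟨XY − YX − Y, XZ − ZX, YZ − ZY⟩, the enveloping algebra of a solvable-but-not-nilpotent Lie algebra, presented as a quotient of the free associative ℚ-algebra on X, Y, Z. Then R has a nonsplit extension of inequivalent one-dimensional representations: there exists a ℚ-algebra homomorphism ρ : R → E_{(1,1)}(K) (upper triangular 2×2 matrices over K) whose two diagonal characters π_1ρ and π_1'ρ are distinct and which is not semisimple. -/

import Mathlib

open Matrix

noncomputable section

/-- The `n × n` matrix with `1`s on the superdiagonal and `0`s elsewhere. -/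
def supDiag (K : Type*) [Semiring K] (n : ℕ) : Matrix (Fin n) (Fin n) K :=
  Matrix.of fun i j => if (i : ℕ) + 1 = (j : ℕ) then 1 else 0

/-- The `n × n` matrix with `1`s on the subdiagonal and `0`s elsewhere. -/
def subDiag (K : Type*) [Semiring K] (n : ℕ) : Matrix (Fin n) (Fin n) K :=
  (supDiag K n).transpose

/-- Block index function for the `(ℓ, m)` block decomposition of `Fin (ℓ + m)`. -/
def blkIdx (ℓ m : ℕ) (i : Fin (ℓ + m)) : ℕ := if (i : ℕ) < ℓ then 0 else 1

/-- `E_{(ℓ,m)}(K)`: the `K`-subalgebra of `M_{ℓ+m}(K)` of block upper triangular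
matrices `[[a, b], [0, c]]` with `a ∈ M_ℓ(K)`, `b ∈ M_{ℓ×m}(K)`, `c ∈ M_m(K)`. -/
def Eblk (K : Type*) [CommRing K] (ℓ m : ℕ) :
    Subalgebra K (Matrix (Fin (ℓ + m)) (Fin (ℓ + m)) K) where
  carrier := { M | M.BlockTriangular (blkIdx ℓ m) }
  mul_mem' ha hb := ha.mul hb
  add_mem' ha hb := ha.add hb
  one_mem' := Matrix.blockTriangular_one
  algebraMap_mem' r := fun i j hij => by
    rw [Matrix.algebraMap_matrix_apply, if_neg]
    rintro rfl
    exact lt_irrefl _ hij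

/-- `T_{(ℓ,m)}(K)`: the set of block matrices `[[0, b], [0, 0]]` with `b ∈ M_{ℓ×m}(K)`. -/
def Tblk (K : Type*) [Semiring K] (ℓ m : ℕ) : Set (Matrix (Fin (ℓ + m)) (Fin (ℓ + m)) K) :=
  { M | ∀ i j : Fin (ℓ + m), ¬((i : ℕ) < ℓ ∧ ℓ ≤ (j : ℕ)) → M i j = 0 }

/-- `π_ℓ`: the upper-left `ℓ × ℓ` block of an `(ℓ+m) × (ℓ+m)` matrix. -/
def blkL (K : Type*) [Semiring K] (ℓ m : ℕ) (M : Matrix (Fin (ℓ + m)) (Fin (ℓ + m)) K) :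
    Matrix (Fin ℓ) (Fin ℓ) K :=
  Matrix.of fun i j => M (Fin.castAdd m i) (Fin.castAdd m j)

/-- `π_m`: the lower-right `m × m` block of an `(ℓ+m) × (ℓ+m)` matrix. -/
def blkR (K : Type*) [Semiring K] (ℓ m : ℕ) (M : Matrix (Fin (ℓ + m)) (Fin (ℓ + m)) K) :
    Matrix (Fin m) (Fin m) K :=
  Matrix.of fun i j => M (Fin.natAdd ℓ i) (Fin.natAdd ℓ j)

/-- The block matrix `I_ℓ = [[1, 0], [0, 0]]` inside `M_{ℓ+m}(K)`. -/
def idL (K : Type*) [Semiring K] (ℓ m : ℕ) : Matrix (Fin (ℓ + m)) (Fin (ℓ + m)) K :=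
  Matrix.of fun i j => if i = j ∧ (i : ℕ) < ℓ then 1 else 0

/-- The defining relations of the enveloping algebra of the two-generated
solvable-but-not-nilpotent Lie algebra (plus a central generator):
`XY - YX = Y`, `XZ = ZX`, `YZ = ZY`. -/
inductive solvRel : FreeAlgebra ℚ (Fin 3) → FreeAlgebra ℚ (Fin 3) → Prop
  | xy : solvRel (FreeAlgebra.ι ℚ 0 * FreeAlgebra.ι ℚ 1 -
      FreeAlgebra.ι ℚ 1 * FreeAlgebra.ι ℚ 0) (FreeAlgebra.ι ℚ 1)
  | xz : solvRel (FreeAlgebra.ι ℚ 0 * FreeAlgebra.ι ℚ 2)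
      (FreeAlgebra.ι ℚ 2 * FreeAlgebra.ι ℚ 0)
  | yz : solvRel (FreeAlgebra.ι ℚ 1 * FreeAlgebra.ι ℚ 2)
      (FreeAlgebra.ι ℚ 2 * FreeAlgebra.ι ℚ 1)


section Stmt19Aux

local notation "K" => AlgebraicClosure ℚ

/-- ρ(X) = diag(1,0). -/
def sM0 : Matrix (Fin (1+1)) (Fin (1+1)) K := !![1,0;0,0]
/-- ρ(Y) = E₁₂. -/
def sM1 : Matrix (Fin (1+1)) (Fin (1+1)) K := !![0,1;0,0]

lemma sM0_mem : sM0 ∈ Eblk K 1 1 := by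
  intro i j h
  fin_cases i <;> fin_cases j <;> simp [blkIdx] at h ⊢ <;> simp [sM0]

lemma sM1_mem : sM1 ∈ Eblk K 1 1 := by
  intro i j h
  fin_cases i <;> fin_cases j <;> simp [blkIdx] at h ⊢ <;> simp [sM1]

/-- the generators, as elements of the subalgebra. -/
def sGen : Fin 3 → Eblk K 1 1 := ![⟨sM0, sM0_mem⟩, ⟨sM1, sM1_mem⟩, 0]

lemma sGen_rel : ∀ ⦃x y⦄, solvRel x y →
    (FreeAlgebra.lift ℚ sGen) x = (FreeAlgebra.lift ℚ sGen) y := by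
  intro x y h
  cases h <;>
  · apply Subtype.ext
    simp only [map_sub, _root_.map_mul, FreeAlgebra.lift_ι_apply, sGen,
      Matrix.cons_val_zero, Matrix.cons_val_one, Matrix.head_cons,
      Matrix.cons_val_two, Matrix.tail_cons,
      MulMemClass.coe_mul, AddSubgroupClass.coe_sub, ZeroMemClass.coe_zero,
      mul_zero, zero_mul]
    try
      ext i j
      fin_cases i <;> fin_cases j <;>
        simp [sM0, sM1, Matrix.mul_apply, Fin.sum_univ_two]

/-- the representation into the subalgebra. -/
def sRho0 : RingQuot solvRel →ₐ[ℚ] Eblk K 1 1 :=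
  RingQuot.liftAlgHom ℚ ⟨FreeAlgebra.lift ℚ sGen, sGen_rel⟩

/-- the representation. -/
def sRho : RingQuot solvRel →ₐ[ℚ] Matrix (Fin (1+1)) (Fin (1+1)) K :=
  ((Eblk K 1 1).val.restrictScalars ℚ).comp sRho0

lemma sRho_mem (a : RingQuot solvRel) : sRho a ∈ Eblk K 1 1 := (sRho0 a).2

lemma sRho_X : sRho (RingQuot.mkAlgHom ℚ solvRel (FreeAlgebra.ι ℚ 0)) = sM0 := by
  simp only [sRho, AlgHom.comp_apply, AlgHom.coe_restrictScalars', sRho0,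
    RingQuot.liftAlgHom_mkAlgHom_apply,
    FreeAlgebra.lift_ι_apply, sGen, Matrix.cons_val_zero, Subalgebra.coe_val]

lemma sRho_Y : sRho (RingQuot.mkAlgHom ℚ solvRel (FreeAlgebra.ι ℚ 1)) = sM1 := by
  simp only [sRho, AlgHom.comp_apply, AlgHom.coe_restrictScalars', sRho0,
    RingQuot.liftAlgHom_mkAlgHom_apply,
    FreeAlgebra.lift_ι_apply, sGen, Matrix.cons_val_one, Matrix.head_cons,
    Subalgebra.coe_val, Matrix.cons_val_zero]

lemma key_sandwich (s : Matrix (Fin (1+1)) (Fin (1+1)) K) (hs : s ∈ Eblk K 1 1) :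
    sM1 * s * sM1 = 0 := by
  have h10 : s 1 0 = 0 := by
    apply hs
    simp [blkIdx]
  ext i j
  fin_cases i <;> fin_cases j <;>
    simp [sM1, Matrix.mul_apply, Matrix.vecMul, dotProduct,
      Fin.sum_univ_two, h10]

end Stmt19Aux

/-- The algebra `ℚ{X,Y,Z}/⟨XY−YX−Y, XZ−ZX, YZ−ZY⟩` has a nonsplit extension
of inequivalent one-dimensional representations: a representation `ρ : R → E_{(1,1)}(K)`
with distinct diagonal characters which is not semisimple. -/
theorem stmt19 :
    ∃ ρ : RingQuot solvRel →ₐ[ℚ]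
        Matrix (Fin (1 + 1)) (Fin (1 + 1)) (AlgebraicClosure ℚ),
      (∀ a, ρ a ∈ Eblk (AlgebraicClosure ℚ) 1 1) ∧
      (∃ a, ρ a ⟨0, by omega⟩ ⟨0, by omega⟩ ≠ ρ a ⟨1, by omega⟩ ⟨1, by omega⟩) ∧
      ¬ IsSemisimpleRing (Algebra.adjoin (AlgebraicClosure ℚ) (Set.range ρ)) := by
  refine ⟨sRho, sRho_mem, ⟨RingQuot.mkAlgHom ℚ solvRel (FreeAlgebra.ι ℚ 0), ?_⟩, ?_⟩
  · rw [sRho_X]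
    simp [sM0]
  · set S := Algebra.adjoin (AlgebraicClosure ℚ) (Set.range sRho) with hS
    intro hss
    have hSle : S ≤ Eblk (AlgebraicClosure ℚ) 1 1 :=
      Algebra.adjoin_le (by rintro _ ⟨a, rfl⟩; exact sRho_mem a)
    have hxmem : sM1 ∈ S := by
      rw [← sRho_Y]
      exact Algebra.subset_adjoin ⟨_, rfl⟩
    set x : S := ⟨sM1, hxmem⟩ with hx
    have hsand : ∀ s : S, x * s * x = 0 := by
      intro s
      apply Subtype.ext
      exact key_sandwich s.1 (hSle s.2)
    obtain ⟨e, he, hspan⟩ := IsSemisimpleRing.ideal_eq_span_idempotent (R := S) (.span {x})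
    have hemem : e ∈ Ideal.span {x} := hspan ▸ Ideal.subset_span rfl
    obtain ⟨r, hr⟩ := Submodule.mem_span_singleton.mp hemem
    have he0 : e = 0 := by
      have : e * e = 0 := by
        rw [← hr, smul_eq_mul]
        calc r * x * (r * x) = r * (x * r * x) := by noncomm_ring
        _ = 0 := by rw [hsand r, mul_zero]
      rw [← he, this]
    have hx0 : x = 0 := by
      have hxm : x ∈ Ideal.span ({e} : Set S) := hspan ▸ Ideal.subset_span rfl
      obtain ⟨c, hc⟩ := Submodule.mem_span_singleton.mp hxm
      rw [he0, smul_eq_mul, mul_zero] at hc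
      exact hc.symm
    have : sM1 = 0 := congrArg Subtype.val hx0
    have := congrFun (congrFun this ⟨0, by omega⟩) ⟨1, by omega⟩
    simp [sM1] at this
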